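/- The ring R₁ generated over ℤ by the recursive matrices s = [[1,0],[0,2s]] and t = [[0,2s],[0,2t]] is isomorphic to the free associative ring (without unit) on two generators; equivalently, the natural surjection from the free ring ℤ⟨σ,τ⟩ onto R₁ sending σ↦s, τ↦t is injective. -/

import Mathlib

/-!
The tree-indexed vector space `V` over `ℚ` with basis the free monoid on two letters
(encoded as `List Bool`). The functionally recursive matrices `s = [[1,0],[0,2s]]` and
`t = [[0,2s],[0,2t]]` of the ring `R₁` act on `V = ℚ·φ ⊕ 0V ⊕ 1V` by the block recursion.
-/

noncomputable section

abbrev V : Type := List Bool →₀ ℚ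

/-- Prefixing by a letter: the embedding `V → yV`. -/
def pre (b : Bool) : V →ₗ[ℚ] V := Finsupp.lmapDomain ℚ ℚ (List.cons b)

/-- Value of `s = [[1,0],[0,2s]]` on a basis word, by recursion. -/
def S1fun : List Bool → V
  | [] => Finsupp.single [] 1
  | false :: u => Finsupp.single (false :: u) 1
  | true :: u => (2 : ℚ) • pre true (S1fun u)

/-- Value of `t = [[0,2s],[0,2t]]` on a basis word, by recursion. -/
def T1fun : List Bool → V
  | [] => 0
  | false :: _ => 0
  | true :: u => (2 : ℚ) • (pre false (S1fun u) + pre true (T1fun u))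

/-- The generator `s` of `R₁`. -/
def s1 : Module.End ℚ V := Finsupp.linearCombination ℚ S1fun

/-- The generator `t` of `R₁`. -/
def t1 : Module.End ℚ V := Finsupp.linearCombination ℚ T1fun

/-- The level-preserving operator with block form `[[e,0,0],[0,A,B],[0,C,D]]` on
`V = ℚ·φ ⊕ 0V ⊕ 1V`, written `e ⊕ [[A,B],[C,D]]`. -/
def blk (e : ℚ) (A B C D : Module.End ℚ V) : Module.End ℚ V :=
  Finsupp.linearCombination ℚ (fun w => match w with
    | [] => Finsupp.single ([] : List Bool) e
    | false :: u => pre false (A (Finsupp.single u 1)) + pre true (C (Finsupp.single u 1))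
    | true :: u => pre false (B (Finsupp.single u 1)) + pre true (D (Finsupp.single u 1)))

/-- The monomial in `s, t` given by a word (`false ↦ s`, `true ↦ t`); the empty word
gives the identity. -/
def mono1 (w : List Bool) : Module.End ℚ V :=
  (w.map (fun b => if b then t1 else s1)).prod

/-- The ring `R₁` generated over `ℤ` by `s = [[1,0],[0,2s]]` and `t = [[0,2s],[0,2t]]`
is isomorphic to the free `2`-generated ring (without unit): the natural surjection
from the free ring sending `σ ↦ s`, `τ ↦ t` is injective; equivalently, the monomials
in `s, t` indexed by nonempty words are linearly independent over `ℤ`. -/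

-- basic lemmas
lemma pre_single (b : Bool) (u : List Bool) (q : ℚ) :
    pre b (Finsupp.single u q) = Finsupp.single (b :: u) q := by
  simp [pre, Finsupp.lmapDomain, Finsupp.mapDomain_single]

lemma s1_single (v : List Bool) (q : ℚ) : s1 (Finsupp.single v q) = q • S1fun v := by
  simp [s1, Finsupp.linearCombination_single]

lemma t1_single (v : List Bool) (q : ℚ) : t1 (Finsupp.single v q) = q • T1fun v := by
  simp [t1, Finsupp.linearCombination_single]

def resL (b : Bool) : V →ₗ[ℚ] V := Finsupp.lcomapDomain (List.cons b) List.cons_injective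

lemma resL_apply (b : Bool) (x : V) (u : List Bool) : resL b x u = x (b :: u) := by
  simp [resL, Finsupp.lcomapDomain, Finsupp.comapDomain_apply]

lemma resL_pre_same (b : Bool) (x : V) : resL b (pre b x) = x := by
  ext u
  rw [resL_apply]
  exact Finsupp.mapDomain_apply List.cons_injective x u

lemma resL_pre_ne {b b' : Bool} (h : b ≠ b') (x : V) : resL b (pre b' x) = 0 := by
  ext u
  rw [resL_apply]
  have : (b :: u) ∉ Set.range (List.cons b') := by
    rintro ⟨w, hw⟩
    exact h (by injection hw with h1 _; exact h1.symm)
  exact Finsupp.mapDomain_notin_range x _ this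

-- generator action on pre
lemma s1_preF (x : V) : s1 (pre false x) = pre false x := by
  have : s1 ∘ₗ pre false = pre false := by
    apply Finsupp.lhom_ext
    intro a b
    simp [pre_single, s1_single, S1fun, Finsupp.smul_single]
  exact LinearMap.congr_fun this x

lemma s1_preT (x : V) : s1 (pre true x) = (2:ℚ) • pre true (s1 x) := by
  have : s1 ∘ₗ pre true = (2:ℚ) • (pre true ∘ₗ s1) := by
    apply Finsupp.lhom_ext
    intro a b
    simp [pre_single, s1_single, S1fun]
    rw [smul_comm]
  exact LinearMap.congr_fun this x

lemma t1_preF (x : V) : t1 (pre false x) = 0 := by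
  have : t1 ∘ₗ pre false = 0 := by
    apply Finsupp.lhom_ext
    intro a b
    simp [pre_single, t1_single, T1fun]
  exact LinearMap.congr_fun this x

lemma t1_preT (x : V) :
    t1 (pre true x) = (2:ℚ) • (pre false (s1 x) + pre true (t1 x)) := by
  have : t1 ∘ₗ pre true = (2:ℚ) • (pre false ∘ₗ s1 + pre true ∘ₗ t1) := by
    apply Finsupp.lhom_ext
    intro a b
    simp [pre_single, t1_single, s1_single, T1fun, smul_add]
    rw [smul_comm b 2, smul_comm b 2]
  exact LinearMap.congr_fun this x


lemma mono1_nil : mono1 [] = 1 := rfl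

lemma mono1_cons (b : Bool) (m : List Bool) :
    mono1 (b :: m) = (if b then t1 else s1) * mono1 m := by
  simp [mono1]

lemma mono1_false (m : List Bool) : mono1 (false :: m) = s1 * mono1 m := by
  simp [mono1_cons]

lemma mono1_true (m : List Bool) : mono1 (true :: m) = t1 * mono1 m := by
  simp [mono1_cons]

lemma A_spec (m : List Bool) (x : V) :
    mono1 m (pre false x) = if true ∈ m then 0 else pre false x := by
  induction m generalizing x with
  | nil => simp [mono1_nil]
  | cons b m ih =>
    cases b with
    | false =>
      rw [mono1_false]
      simp only [Module.End.mul_apply, ih]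
      by_cases h : true ∈ m <;> simp [h, s1_preF]
    | true =>
      rw [mono1_true]
      simp only [Module.End.mul_apply, ih]
      by_cases h : true ∈ m <;> simp [h, t1_preF]

def Bm : List Bool → Module.End ℚ V
  | [] => 0
  | false :: m => Bm m
  | true :: m => ((2:ℚ)^(m.length+1)) • (s1 * mono1 m)

lemma B_spec (m : List Bool) (x : V) :
    mono1 m (pre true x) = pre false (Bm m x) + (2^m.length : ℚ) • pre true (mono1 m x) := by
  induction m generalizing x with
  | nil => simp [mono1_nil, Bm]
  | cons b m ih =>
    cases b with
    | false =>
      rw [mono1_false]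
      simp only [Module.End.mul_apply, ih, Bm]
      rw [map_add, map_smul, s1_preF, s1_preT]
      rw [smul_smul, List.length_cons, pow_succ]
    | true =>
      rw [mono1_true]
      simp only [Module.End.mul_apply, ih, Bm]
      rw [map_add, map_smul, t1_preF, t1_preT]
      simp only [LinearMap.smul_apply, Module.End.mul_apply, map_smul, smul_smul, smul_add,
        pow_succ, zero_add, List.length_cons]

lemma Bm_of_not_mem {m : List Bool} (h : true ∉ m) : Bm m = 0 := by
  induction m with
  | nil => rfl
  | cons b m ih =>
    cases b with
    | false => simpa [Bm] using ih (by simp at h; exact h)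
    | true => simp at h


/-- block-component extractor `f ↦ resL a ∘ f ∘ pre b`, as a linear map on `End`. -/
def comp3 (a b : Bool) : Module.End ℚ V →ₗ[ℚ] Module.End ℚ V where
  toFun f := (resL a) ∘ₗ f ∘ₗ (pre b)
  map_add' f g := by ext x; simp
  map_smul' q f := by ext x; simp

lemma comp3_apply (a b : Bool) (f : Module.End ℚ V) (x : V) :
    comp3 a b f x = resL a (f (pre b x)) := rfl

lemma toA_mono (m : List Bool) :
    comp3 false false (mono1 m) = if true ∈ m then 0 else 1 := by
  refine LinearMap.ext fun x => ?_
  rw [comp3_apply, A_spec]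
  by_cases h : true ∈ m <;> simp [h, resL_pre_same]

lemma toB_mono (m : List Bool) : comp3 false true (mono1 m) = Bm m := by
  refine LinearMap.ext fun x => ?_
  rw [comp3_apply, B_spec, map_add, map_smul, resL_pre_same, resL_pre_ne (by simp)]
  simp

lemma toD_mono (m : List Bool) :
    comp3 true true (mono1 m) = (2^m.length : ℚ) • mono1 m := by
  refine LinearMap.ext fun x => ?_
  rw [comp3_apply, B_spec, map_add, map_smul, resL_pre_same, resL_pre_ne (by simp)]
  simp

/-- leading run of `true`s -/
def run : List Bool → ℕ
  | [] => 0
  | false :: _ => 0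
  | true :: u => run u + 1

lemma S1fun_eq (v : List Bool) : S1fun v = ((2:ℚ)^run v) • Finsupp.single v 1 := by
  induction v with
  | nil => simp [S1fun, run]
  | cons b u ih =>
    cases b with
    | false => simp [S1fun, run]
    | true =>
      simp only [S1fun, run, ih, map_smul, pre_single]
      rw [smul_smul, pow_succ]
      ring_nf

def invS : Module.End ℚ V :=
  Finsupp.linearCombination ℚ (fun v => ((2:ℚ)^run v)⁻¹ • Finsupp.single v 1)

lemma invS_s1 : invS * s1 = 1 := by
  apply Finsupp.lhom_ext
  intro a b
  have h2 : ((2:ℚ)^run a) ≠ 0 := by positivity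
  simp only [Module.End.mul_apply, Module.End.one_apply, s1_single, S1fun_eq, map_smul, invS,
    Finsupp.linearCombination_single, one_smul, smul_smul]
  rw [Finsupp.smul_single, smul_eq_mul, mul_one]
  congr 1
  field_simp

lemma s1_cancel {X : Module.End ℚ V} (h : s1 * X = 0) : X = 0 := by
  calc X = (invS * s1) * X := by rw [invS_s1, one_mul]
  _ = invS * (s1 * X) := by rw [mul_assoc]
  _ = 0 := by rw [h, mul_zero]

/-- number of leading `false`s -/
def fIdx : List Bool → ℕ
  | [] => 0
  | false :: m => fIdx m + 1
  | true :: _ => 0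

/-- what follows the first `true` -/
def rst : List Bool → List Bool
  | [] => []
  | false :: m => rst m
  | true :: m => m

lemma decomp {m : List Bool} (h : true ∈ m) :
    m = List.replicate (fIdx m) false ++ true :: rst m := by
  induction m with
  | nil => simp at h
  | cons b m ih =>
    cases b with
    | false =>
      have h' : true ∈ m := by simpa using h
      simpa [fIdx, rst, List.replicate_succ] using congrArg (List.cons false) (ih h')
    | true => simp [fIdx, rst]

lemma rst_len {m : List Bool} (h : true ∈ m) :
    (rst m).length + fIdx m + 1 = m.length := by
  conv_rhs => rw [decomp h]
  simp; ring

lemma Bm_eq {m : List Bool} (h : true ∈ m) :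
    Bm m = ((2:ℚ)^((rst m).length + 1)) • (s1 * mono1 (rst m)) := by
  induction m with
  | nil => simp at h
  | cons b m ih =>
    cases b with
    | false =>
      have h' : true ∈ m := by simpa using h
      simp [Bm, rst, ih h']
    | true => simp [Bm, rst]

lemma rst_inj {m m' : List Bool} (hm : true ∈ m) (hm' : true ∈ m')
    (hl : m.length = m'.length) (he : rst m = rst m') : m = m' := by
  have h1 := rst_len hm
  have h2 := rst_len hm'
  rw [he] at h1
  have : fIdx m = fIdx m' := by omega
  rw [decomp hm, decomp hm', this, he]

/-- Vandermonde-type separation lemma. -/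
lemma vdm {M : Type*} [AddCommGroup M] [Module ℚ M] (T : Finset ℚ) :
    ∀ (w : ℚ → M), (∀ j : ℕ, ∑ y ∈ T, y^j • w y = 0) → ∀ y ∈ T, w y = 0 := by
  induction T using Finset.strongInduction with
  | _ T ih =>
    intro w h y0 hy0
    have key : ∀ y ∈ T.erase y0, w y = 0 := by
      intro y hy
      have h' : ∀ j : ℕ, ∑ z ∈ T.erase y0, z^j • ((z - y0) • w z) = 0 := by
        intro j
        have e1 := h (j+1)
        have e2 := h j
        have e3 : ∑ z ∈ T, (z^(j+1) • w z - y0 • z^j • w z) = 0 := by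
          rw [Finset.sum_sub_distrib, e1, ← Finset.smul_sum, e2, smul_zero, sub_zero]
        have e4 : ∀ z ∈ T, z^(j+1) • w z - y0 • z^j • w z = z^j • ((z - y0) • w z) := by
          intro z _
          simp only [smul_smul, ← sub_smul]
          congr 1
          ring
        rw [Finset.sum_congr rfl e4] at e3
        rw [← e3]
        refine Finset.sum_subset (Finset.erase_subset _ _) ?_
        intro z hz hz'
        have hzy : z = y0 := by
          by_contra hne
          exact hz' (Finset.mem_erase.mpr ⟨hne, hz⟩)
        simp [hzy]
      have := ih (T.erase y0) (Finset.erase_ssubset hy0) (fun z => (z - y0) • w z) h' y hy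
      have hne : y - y0 ≠ 0 := sub_ne_zero.mpr (Finset.mem_erase.mp hy).1
      exact (smul_eq_zero.mp this).resolve_left hne
    have h0 := h 0
    simp only [pow_zero, one_smul] at h0
    rw [← Finset.add_sum_erase T w hy0] at h0
    rw [Finset.sum_congr rfl (fun z hz => key z hz)] at h0
    simpa using h0


lemma one_ne_zero_End : (1 : Module.End ℚ V) ≠ 0 := by
  intro h
  have h1 : (1 : Module.End ℚ V) (Finsupp.single [] 1) = Finsupp.single ([] : List Bool) (1:ℚ) := rfl
  rw [h] at h1
  have : ((0 : Module.End ℚ V) (Finsupp.single [] 1)) [] = (Finsupp.single ([] : List Bool) (1:ℚ)) [] :=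
    congrFun (congrArg _ h1) []
  simpa using this

lemma redecomp {m : List Bool} (h : true ∈ m) :
    List.replicate (m.length - (rst m).length - 1) false ++ true :: rst m = m := by
  have h1 := rst_len h
  have h2 : m.length - (rst m).length - 1 = fIdx m := by omega
  rw [h2]
  exact (decomp h).symm

lemma pow2_len_inj {a b : ℕ} (h : (2:ℚ)^a = (2:ℚ)^b) : a = b := by
  have : ((2^a : ℕ) : ℚ) = ((2^b : ℕ) : ℚ) := by push_cast; exact_mod_cast h
  exact Nat.pow_right_injective (le_refl 2) (Nat.cast_injective this)

lemma main : ∀ n : ℕ, ∀ F : Finset (List Bool), ∀ c : List Bool → ℚ,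
    (∀ m ∈ F, m.length ≤ n) → ∑ m ∈ F, c m • mono1 m = 0 → ∀ m ∈ F, c m = 0 := by
  intro n
  induction n using Nat.strong_induction_on with
  | _ n ih =>
  intro F c hlen hrel m0 hm0
  classical
  -- Step 1: iterate the D-block to get relations at all powers
  have hD : ∀ j : ℕ, ∑ m ∈ F, ((2:ℚ)^m.length)^j • (c m • mono1 m) = 0 := by
    intro j
    induction j with
    | zero => simpa using hrel
    | succ j ihj =>
      have h2 := congrArg (comp3 true true) ihj
      rw [map_sum, map_zero] at h2
      simp only [map_smul, toD_mono] at h2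
      rw [← h2]
      apply Finset.sum_congr rfl
      intro m _
      simp only [smul_smul]
      congr 1
      ring
  -- Step 2: Vandermonde separation by length
  have hsep : ∑ m ∈ F.filter (fun m => m.length = m0.length), c m • mono1 m = 0 := by
    have hv := vdm (F.image (fun m => ((2:ℚ)^m.length)))
      (fun y => ∑ m ∈ F.filter (fun m => ((2:ℚ)^m.length) = y), c m • mono1 m)
      (by
        intro j
        have hfib : ∑ y ∈ F.image (fun m => ((2:ℚ)^m.length)),
            ∑ m ∈ F.filter (fun m => ((2:ℚ)^m.length) = y),
              ((2:ℚ)^m.length)^j • (c m • mono1 m) = 0 := by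
          rw [Finset.sum_fiberwise_of_maps_to (fun x hx => Finset.mem_image_of_mem _ hx)]
          exact hD j
        rw [← hfib]
        apply Finset.sum_congr rfl
        intro y _
        rw [Finset.smul_sum]
        apply Finset.sum_congr rfl
        intro m hm
        rw [(Finset.mem_filter.mp hm).2])
      ((2:ℚ)^m0.length) (Finset.mem_image_of_mem _ hm0)
    have hfe : F.filter (fun m => ((2:ℚ)^m.length) = (2:ℚ)^m0.length)
        = F.filter (fun m => m.length = m0.length) := by
      apply Finset.filter_congr
      intro m _
      constructor
      · exact fun h => pow2_len_inj h
      · exact fun h => by rw [h]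
    rwa [hfe] at hv
  set L := m0.length with hL
  set FL := F.filter (fun m => m.length = L) with hFL
  have hm0L : m0 ∈ FL := Finset.mem_filter.mpr ⟨hm0, rfl⟩
  by_cases hT : true ∈ m0
  · -- Case: m0 contains a t; use the B-block
    have hB : ∑ m ∈ FL, c m • Bm m = 0 := by
      have h2 := congrArg (comp3 false true) hsep
      rw [map_sum, map_zero] at h2
      simpa only [map_smul, toB_mono] using h2
    set FLT := FL.filter (fun m => true ∈ m) with hFLT
    have hBT : ∑ m ∈ FLT, c m • Bm m = 0 := by
      rw [← hB]
      apply Finset.sum_filter_of_ne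
      intro m _ hne
      by_contra hmem
      exact hne (by rw [Bm_of_not_mem hmem, smul_zero])
    -- rewrite using Bm_eq and pull out s1
    set c' : List Bool → ℚ :=
      fun u => (2:ℚ)^(u.length+1) * c (List.replicate (L - u.length - 1) false ++ true :: u)
      with hc'
    have hc'val : ∀ m ∈ FLT, c' (rst m) = (2:ℚ)^((rst m).length+1) * c m := by
      intro m hm
      have hmem : true ∈ m := (Finset.mem_filter.mp hm).2
      have hlenm : m.length = L := (Finset.mem_filter.mp (Finset.mem_filter.mp hm).1).2
      rw [hc']
      simp only
      rw [← hlenm, redecomp hmem]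
    have hX : s1 * (∑ m ∈ FLT, c' (rst m) • mono1 (rst m)) = 0 := by
      rw [Finset.mul_sum, ← hBT]
      apply Finset.sum_congr rfl
      intro m hm
      have hmem : true ∈ m := (Finset.mem_filter.mp hm).2
      simp only [hc'val m hm, Bm_eq hmem, mul_smul_comm, smul_smul]
      congr 1
      ring
    have hX0 := s1_cancel hX
    -- reindex by the image under rst
    have hinj : ∀ x ∈ FLT, ∀ y ∈ FLT, rst x = rst y → x = y := by
      intro x hx y hy hxy
      have hx1 := Finset.mem_filter.mp hx
      have hy1 := Finset.mem_filter.mp hy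
      have hx2 := (Finset.mem_filter.mp hx1.1).2
      have hy2 := (Finset.mem_filter.mp hy1.1).2
      exact rst_inj hx1.2 hy1.2 (by rw [hx2, hy2]) hxy
    have himg : ∑ u ∈ FLT.image rst, c' u • mono1 u = 0 := by
      rw [Finset.sum_image hinj]
      exact hX0
    -- apply the induction hypothesis at level L - 1 < n
    have hLpos : 1 ≤ L := by
      rw [hL]
      cases m0 with
      | nil => simp at hT
      | cons b m => simp
    have hLn : L ≤ n := hlen m0 hm0
    have hlen' : ∀ u ∈ FLT.image rst, u.length ≤ L - 1 := by
      intro u hu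
      obtain ⟨m, hm, rfl⟩ := Finset.mem_image.mp hu
      have hmem : true ∈ m := (Finset.mem_filter.mp hm).2
      have hlenm : m.length = L := (Finset.mem_filter.mp (Finset.mem_filter.mp hm).1).2
      have := rst_len hmem
      omega
    have hc'0 := ih (L-1) (by omega) (FLT.image rst) c' hlen' himg (rst m0)
      (Finset.mem_image_of_mem rst (Finset.mem_filter.mpr ⟨hm0L, hT⟩))
    have := hc'val m0 (Finset.mem_filter.mpr ⟨hm0L, hT⟩)
    rw [hc'0] at this
    have h2ne : ((2:ℚ)^((rst m0).length+1)) ≠ 0 := by positivity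
    field_simp at this
    exact (mul_eq_zero.mp this.symm).resolve_left h2ne
  · -- Case: m0 is all s's; use the A-block
    have hA : ∑ m ∈ FL, c m • (if true ∈ m then (0 : Module.End ℚ V) else 1) = 0 := by
      have h2 := congrArg (comp3 false false) hsep
      rw [map_sum, map_zero] at h2
      simpa only [map_smul, toA_mono] using h2
    have hsingle : FL.filter (fun m => ¬ (true ∈ m)) = {m0} := by
      apply Finset.Subset.antisymm
      · intro m hm
        have h1 := Finset.mem_filter.mp hm
        have h2 : m.length = L := (Finset.mem_filter.mp h1.1).2
        have h3 : m = List.replicate L false := by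
          rw [List.eq_replicate_iff]
          refine ⟨h2, fun b hb => ?_⟩
          cases b
          · rfl
          · exact absurd hb h1.2
        have h4 : m0 = List.replicate L false := by
          rw [List.eq_replicate_iff]
          refine ⟨rfl, fun b hb => ?_⟩
          cases b
          · rfl
          · exact absurd hb hT
        simp [h3, ← h4]
      · intro m hm
        rw [Finset.mem_singleton] at hm
        subst hm
        exact Finset.mem_filter.mpr ⟨hm0L, hT⟩
    have hsum : ∑ m ∈ FL, c m • (if true ∈ m then (0 : Module.End ℚ V) else 1)
        = c m0 • (1 : Module.End ℚ V) := by
      rw [← Finset.sum_filter_of_ne (p := fun m => ¬ (true ∈ m))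
        (fun m _ hne => by
          intro hmem
          exact hne (by rw [if_pos hmem, smul_zero])), hsingle, Finset.sum_singleton,
        if_neg hT]
    rw [hsum] at hA
    rcases smul_eq_zero.mp hA with h | h
    · exact h
    · exact absurd h one_ne_zero_End

theorem R1_free :
    LinearIndependent ℤ (fun w : {l : List Bool // l ≠ []} => mono1 w.val) := by
  classical
  have hQ : LinearIndependent ℚ (fun w : {l : List Bool // l ≠ []} => mono1 w.val) := by
    rw [linearIndependent_iff']
    intro S g hrel w hw
    set c : List Bool → ℚ := fun m => if h : m = [] then 0 else g ⟨m, h⟩ with hc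
    set F := S.image Subtype.val with hF
    have hinj : ∀ x ∈ S, ∀ y ∈ S, (x : {l : List Bool // l ≠ []}).val = y.val → x = y :=
      fun x _ y _ h => Subtype.ext h
    have hrel' : ∑ m ∈ F, c m • mono1 m = 0 := by
      rw [hF, Finset.sum_image hinj, ← hrel]
      apply Finset.sum_congr rfl
      intro x _
      congr 1
      rw [hc]
      simp [x.prop]
    have := main (F.sup List.length) F c (fun m hm => Finset.le_sup hm) hrel' w.val
      (Finset.mem_image_of_mem _ hw)
    rw [hc] at this
    simpa [w.prop] using this
  rw [linearIndependent_iff']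
  intro S g hrel w hw
  have hrel' : ∑ i ∈ S, ((g i : ℚ)) • mono1 i.val = 0 := by
    rw [← hrel]
    exact Finset.sum_congr rfl fun i _ => Int.cast_smul_eq_zsmul ℚ (g i) (mono1 i.val)
  have := linearIndependent_iff'.mp hQ S (fun i => (g i : ℚ)) hrel' w hw
  exact_mod_cast this

end
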